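/- (Second-order integrability condition, ν = 1) Let B : ℝ → (V × V → V) be a family of bilinear alternating brackets with B_0 = [·,·], each B_t satisfying the Jacobi identity, and suppose for all X, Y the map t ↦ B_t(X,Y) is twice differentiable at t = 0, with first derivative C_1(X,Y) and second derivative C_2(X,Y) at t = 0. Then for all X, Y, Z ∈ V: C_2([X,Y],Z) + C_2([Y,Z],X) + C_2([Z,X],Y) + [C_2(X,Y),Z] + [C_2(Y,Z),X] + [C_2(Z,X),Y] + 2·( C_1(C_1(X,Y),Z) + C_1(C_1(Y,Z),X) + C_1(C_1(Z,X),Y) ) = 0, i.e. dC_2 plus the Hessian of the Jacobi relations evaluated on (C_1, C_1) vanishes. -/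

import Mathlib

/-- second-order integrability condition, ν = 1: let `B t` be a family of
bilinear alternating brackets with `B 0 = bracket`, each satisfying the Jacobi identity,
twice differentiable at `t = 0` (first derivative `B'` on a neighborhood of `0`, with
`B' 0 = C1`, and `t ↦ B' t X Y` differentiable at `0` with derivative `C2 X Y`).  Then
`dC2` plus the Hessian of the Jacobi relations evaluated on `(C1, C1)` vanishes. -/
theorem second_order_integrability_condition
    {V : Type*} [NormedAddCommGroup V] [NormedSpace ℝ V] [FiniteDimensional ℝ V]
    (bracket : V →ₗ[ℝ] V →ₗ[ℝ] V)
    (halt : ∀ X : V, bracket X X = 0)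
    (hjac : ∀ X Y Z : V,
      bracket (bracket X Y) Z + bracket (bracket Y Z) X + bracket (bracket Z X) Y = 0)
    (B : ℝ → V →ₗ[ℝ] V →ₗ[ℝ] V)
    (hB0 : B 0 = bracket)
    (hBalt : ∀ t : ℝ, ∀ X : V, B t X X = 0)
    (hBjac : ∀ t : ℝ, ∀ X Y Z : V,
      B t (B t X Y) Z + B t (B t Y Z) X + B t (B t Z X) Y = 0)
    (B' : ℝ → V → V → V) (C1 C2 : V → V → V)
    (hB' : ∀ X Y : V, ∀ᶠ t in nhds (0 : ℝ), HasDerivAt (fun s : ℝ => B s X Y) (B' t X Y) t)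
    (hB'0 : ∀ X Y : V, B' 0 X Y = C1 X Y)
    (hC2 : ∀ X Y : V, HasDerivAt (fun t : ℝ => B' t X Y) (C2 X Y) 0) :
    ∀ X Y Z : V,
      C2 (bracket X Y) Z + C2 (bracket Y Z) X + C2 (bracket Z X) Y +
        bracket (C2 X Y) Z + bracket (C2 Y Z) X + bracket (C2 Z X) Y +
        2 • (C1 (C1 X Y) Z + C1 (C1 Y Z) X + C1 (C1 Z X) Y) = 0 := by
  classical
  intro X Y Z
  set b := Module.finBasis ℝ V with hb
  -- basis expansion of `B` in its first argument
  have Bexp : ∀ (t : ℝ) (u w : V), B t u w = ∑ i, b.repr u i • B t (b i) w := by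
    intro t u w
    conv_lhs => rw [← b.sum_repr u]
    simp only [map_sum, LinearMap.sum_apply, map_smul, LinearMap.smul_apply]
  -- coordinate functions behave well under derivatives
  have hrepr : ∀ (i) (v : ℝ → V) (v' : V) (x : ℝ), HasDerivAt v v' x →
      HasDerivAt (fun t => b.repr (v t) i) (b.repr v' i) x := by
    intro i v v' x hv
    have := (LinearMap.toContinuousLinearMap (b.coord i)).hasFDerivAt.comp_hasDerivAt x hv
    exact this
  -- derivative of the family at 0 is C1
  have hB'at0 : ∀ X Y : V, HasDerivAt (fun s : ℝ => B s X Y) (C1 X Y) 0 := by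
    intro X Y
    have := (hB' X Y).self_of_nhds
    rwa [hB'0] at this
  -- C1 is linear in the first argument (w.r.t. the basis)
  have C1exp : ∀ u w : V, C1 u w = ∑ i, b.repr u i • C1 (b i) w := by
    intro u w
    refine (hB'at0 u w).unique ?_
    have h3 : HasDerivAt (fun s : ℝ => ∑ i, b.repr u i • B s (b i) w)
        (∑ i, b.repr u i • C1 (b i) w) 0 :=
      HasDerivAt.fun_sum fun i _ => (hB'at0 (b i) w).fun_const_smul _
    exact h3.congr_of_eventuallyEq (Filter.Eventually.of_forall fun s => Bexp s u w)
  -- C2 is linear in the first argument (w.r.t. the basis)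
  have C2exp : ∀ u w : V, C2 u w = ∑ i, b.repr u i • C2 (b i) w := by
    intro u w
    have hev : ∀ᶠ t in nhds (0 : ℝ), B' t u w = ∑ i, b.repr u i • B' t (b i) w := by
      filter_upwards [hB' u w, Filter.eventually_all.2 fun i => hB' (b i) w] with t ht1 ht2
      refine ht1.unique ?_
      have h3 : HasDerivAt (fun s : ℝ => ∑ i, b.repr u i • B s (b i) w)
          (∑ i, b.repr u i • B' t (b i) w) t :=
        HasDerivAt.fun_sum fun i _ => (ht2 i).fun_const_smul _
      exact h3.congr_of_eventuallyEq (Filter.Eventually.of_forall fun s => Bexp s u w)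
    refine (hC2 u w).unique ?_
    have h4 : HasDerivAt (fun t : ℝ => ∑ i, b.repr u i • B' t (b i) w)
        (∑ i, b.repr u i • C2 (b i) w) 0 :=
      HasDerivAt.fun_sum fun i _ => (hC2 (b i) w).fun_const_smul _
    exact h4.congr_of_eventuallyEq hev
  -- bracket expansion
  have bexp : ∀ u w : V, bracket u w = ∑ i, b.repr u i • bracket (b i) w := by
    intro u w
    have := Bexp 0 u w
    rwa [hB0] at this
  -- first derivative of the Jacobi term, eventually near 0
  have hf1 : ∀ X Y Z : V, ∀ᶠ t in nhds (0 : ℝ),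
      HasDerivAt (fun s : ℝ => B s (B s X Y) Z)
        (∑ i, (b.repr (B t X Y) i • B' t (b i) Z + b.repr (B' t X Y) i • B t (b i) Z)) t := by
    intro X Y Z
    filter_upwards [hB' X Y, Filter.eventually_all.2 fun i => hB' (b i) Z] with t ht1 ht2
    have h3 : HasDerivAt (fun s : ℝ => ∑ i, b.repr (B s X Y) i • B s (b i) Z)
        (∑ i, (b.repr (B t X Y) i • B' t (b i) Z + b.repr (B' t X Y) i • B t (b i) Z)) t :=
      HasDerivAt.fun_sum fun i _ => (hrepr i _ _ t ht1).fun_smul (ht2 i)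
    exact h3.congr_of_eventuallyEq (Filter.Eventually.of_forall fun s => Bexp s (B s X Y) Z)
  -- the eventual first-derivative expression sums (cyclically) to zero
  have hsum0 : ∀ᶠ t in nhds (0 : ℝ),
      (∑ i, (b.repr (B t X Y) i • B' t (b i) Z + b.repr (B' t X Y) i • B t (b i) Z)) +
      (∑ i, (b.repr (B t Y Z) i • B' t (b i) X + b.repr (B' t Y Z) i • B t (b i) X)) +
      (∑ i, (b.repr (B t Z X) i • B' t (b i) Y + b.repr (B' t Z X) i • B t (b i) Y)) = 0 := by
    filter_upwards [hf1 X Y Z, hf1 Y Z X, hf1 Z X Y] with t h1 h2 h3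
    have hJ := (h1.fun_add h2).fun_add h3
    have Jeq : (fun s : ℝ => B s (B s X Y) Z + B s (B s Y Z) X + B s (B s Z X) Y)
        = fun _ : ℝ => (0 : V) := funext fun s => hBjac s X Y Z
    rw [Jeq] at hJ
    exact ((hasDerivAt_const t (0 : V)).unique hJ).symm
  -- derivative at 0 of each first-derivative expression
  have hψd : ∀ X Y Z : V,
      HasDerivAt (fun t : ℝ =>
        ∑ i, (b.repr (B t X Y) i • B' t (b i) Z + b.repr (B' t X Y) i • B t (b i) Z))
        (C2 (bracket X Y) Z + bracket (C2 X Y) Z + (C1 (C1 X Y) Z + C1 (C1 X Y) Z)) 0 := by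
    intro X Y Z
    have h := HasDerivAt.fun_sum (u := Finset.univ) (x := (0 : ℝ))
      (A := fun i t => b.repr (B t X Y) i • B' t (b i) Z + b.repr (B' t X Y) i • B t (b i) Z)
      (A' := fun i =>
        (b.repr (B 0 X Y) i • C2 (b i) Z + b.repr (C1 X Y) i • B' 0 (b i) Z) +
        (b.repr (B' 0 X Y) i • C1 (b i) Z + b.repr (C2 X Y) i • B 0 (b i) Z))
      (fun i _ => ((hrepr i _ (C1 X Y) 0 (hB'at0 X Y)).smul (hC2 (b i) Z)).add
        ((hrepr i _ (C2 X Y) 0 (hC2 X Y)).smul (hB'at0 (b i) Z)))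
    have heq : (∑ i, ((b.repr (B 0 X Y) i • C2 (b i) Z + b.repr (C1 X Y) i • B' 0 (b i) Z) +
        (b.repr (B' 0 X Y) i • C1 (b i) Z + b.repr (C2 X Y) i • B 0 (b i) Z)))
        = C2 (bracket X Y) Z + bracket (C2 X Y) Z + (C1 (C1 X Y) Z + C1 (C1 X Y) Z) := by
      simp only [hB0, hB'0, Finset.sum_add_distrib]
      rw [← C2exp (bracket X Y) Z, ← C1exp (C1 X Y) Z, ← bexp (C2 X Y) Z]
      abel
    rw [heq] at h
    exact h
  -- combine
  have hD := ((hψd X Y Z).add (hψd Y Z X)).add (hψd Z X Y)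
  have hzero := hD.congr_of_eventuallyEq (hsum0.mono fun t ht => ht.symm)
  have h0 := ((hasDerivAt_const (0 : ℝ) (0 : V)).unique hzero).symm
  rw [← h0]
  abel
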